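/- Let G and H be groups, ν : G → H a group homomorphism, and s ⊆ H × G a relation such that: (i) whenever (f,g) ∈ s we have ν(g) = f; (ii) for every f ∈ H there exists g ∈ G with (f,g) ∈ s; (iii) if (f₁,g₁) ∈ s and (f₂,g₂) ∈ s then (f₁f₂, g₁g₂) ∈ s; and (iv) any two elements of s⁻ := {g ∈ G : (1,g) ∈ s} commute with each other. Then ν is surjective, the subgroup ⟨s⁻⟩ of G generated by s⁻ is commutative, and ν has a weak splitting; indeed any function s₀ : H → G with (f, s₀(f)) ∈ s for all f ∈ H is a weak splitting of ν, with G₀ = ⟨s⁻⟩ witnessing condition (b). -/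

import Mathlib

/-- A weak splitting of a surjective group homomorphism `ν : G → H`. -/
def IsWeakSplitting {G H : Type*} [Group G] [Group H] (ν : G →* H) (s : H → G) : Prop :=
  (∀ h, ν (s h) = h) ∧
  ∃ G₀ : Subgroup G,
    (∀ a ∈ G₀, ∀ b ∈ G₀, a * b = b * a) ∧
    ∀ l : List (H × ℤ), (∀ p ∈ l, p.2 = 1 ∨ p.2 = -1) →
      (l.map fun p => p.1 ^ p.2).prod = 1 →
      (l.map fun p => s p.1 ^ p.2).prod ∈ G₀

/-- Let `ν : G → H` be a group homomorphism and `s ⊆ H × G` a relation such that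
(i) `(f,g) ∈ s → ν g = f`, (ii) every `f ∈ H` has some `g` with `(f,g) ∈ s`,
(iii) `s` is closed under products, and (iv) the set `s⁻ = {g | (1,g) ∈ s}` is
commutative.  Then `ν` is surjective, the subgroup `⟨s⁻⟩` generated by `s⁻` is
commutative, `ν` has a weak splitting, and indeed every function `s₀ : H → G` choosing
for each `f` some `s₀ f` with `(f, s₀ f) ∈ s` is a weak splitting of `ν`, with
`G₀ = ⟨s⁻⟩` witnessing condition (b). -/
theorem weakSplitting_of_rel {G H : Type*} [Group G] [Group H]
    (ν : G →* H) (s : Set (H × G))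
    (h1 : ∀ f g, (f, g) ∈ s → ν g = f)
    (h2 : ∀ f : H, ∃ g : G, (f, g) ∈ s)
    (h3 : ∀ f₁ g₁ f₂ g₂, (f₁, g₁) ∈ s → (f₂, g₂) ∈ s → (f₁ * f₂, g₁ * g₂) ∈ s)
    (h4 : ∀ g₁ g₂ : G, (1, g₁) ∈ s → (1, g₂) ∈ s → g₁ * g₂ = g₂ * g₁) :
    Function.Surjective ν ∧
    (∀ a ∈ Subgroup.closure {g : G | (1, g) ∈ s},
      ∀ b ∈ Subgroup.closure {g : G | (1, g) ∈ s}, a * b = b * a) ∧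
    (∃ s₀ : H → G, IsWeakSplitting ν s₀) ∧
    (∀ s₀ : H → G, (∀ f : H, (f, s₀ f) ∈ s) →
      (∀ h, ν (s₀ h) = h) ∧
      (∀ l : List (H × ℤ), (∀ p ∈ l, p.2 = 1 ∨ p.2 = -1) →
        (l.map fun p => p.1 ^ p.2).prod = 1 →
        (l.map fun p => s₀ p.1 ^ p.2).prod ∈
          Subgroup.closure {g : G | (1, g) ∈ s})) := by

  set K : Set G := {g : G | (1, g) ∈ s} with hKdef
  set N := Subgroup.closure K with hNdef
  -- commutativity of N
  have hKc : K ⊆ (Subgroup.centralizer K : Set G) := by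
    intro k hk
    rw [SetLike.mem_coe, Subgroup.mem_centralizer_iff]
    intro h hh
    exact h4 h k hh hk
  have hNc : N ≤ Subgroup.centralizer K := Subgroup.closure_le _ |>.2 hKc
  have hcomm : ∀ a ∈ N, ∀ b ∈ N, a * b = b * a := by
    intro a ha b hb
    have hKN : K ⊆ (Subgroup.centralizer (N : Set G) : Set G) := by
      intro k hk
      rw [SetLike.mem_coe, Subgroup.mem_centralizer_iff]
      intro x hx
      exact (Subgroup.mem_centralizer_iff.1 (hNc hx) k hk).symm
    have := (Subgroup.closure_le _ |>.2 hKN) hb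
    exact Subgroup.mem_centralizer_iff.1 this a ha
  -- normalization
  have hnorm : ∀ c : G, (∃ f, (f, c) ∈ s) → ∀ n ∈ N, c * n * c⁻¹ ∈ N := by
    rintro c ⟨f, hc⟩
    have hle : N ≤ Subgroup.comap (MulAut.conj c).toMonoidHom N := by
      rw [hNdef, Subgroup.closure_le]
      intro k hk
      obtain ⟨d, hd⟩ := h2 f⁻¹
      have hck : (f * 1, c * k) ∈ s := h3 f c 1 k hc hk
      have hckd : (1, (c * k) * d) ∈ s := by
        have := h3 (f * 1) (c * k) f⁻¹ d hck hd
        simpa using this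
      have hcd : (1, c * d) ∈ s := by
        have := h3 f c f⁻¹ d hc hd
        simpa using this
      have heq : c * k * c⁻¹ = ((c * k) * d) * (c * d)⁻¹ := by group
      show (MulAut.conj c).toMonoidHom k ∈ N
      simp only [MulEquiv.toMonoidHom_eq_coe, MonoidHom.coe_coe, MulAut.conj_apply]
      rw [heq]
      exact mul_mem (Subgroup.subset_closure hckd) (inv_mem (Subgroup.subset_closure hcd))
    intro n hn
    have := hle hn
    simpa using this
  have part4 : ∀ s₀ : H → G, (∀ f : H, (f, s₀ f) ∈ s) →
      (∀ h, ν (s₀ h) = h) ∧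
      (∀ l : List (H × ℤ), (∀ p ∈ l, p.2 = 1 ∨ p.2 = -1) →
        (l.map fun p => p.1 ^ p.2).prod = 1 →
        (l.map fun p => s₀ p.1 ^ p.2).prod ∈ N) := by
    intro s₀ hs₀
    refine ⟨fun h => h1 h (s₀ h) (hs₀ h), ?_⟩
    have main : ∀ l : List (H × ℤ), (∀ p ∈ l, p.2 = 1 ∨ p.2 = -1) →
        ∃ c : G, ((l.map fun p => p.1 ^ p.2).prod, c) ∈ s ∧
          (l.map fun p => s₀ p.1 ^ p.2).prod * c⁻¹ ∈ N := by
      intro l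
      induction l with
      | nil =>
        intro _
        refine ⟨s₀ 1, by simpa using hs₀ 1, ?_⟩
        simp only [List.map_nil, List.prod_nil, one_mul]
        exact inv_mem (Subgroup.subset_closure (hs₀ 1))
      | cons p l ih =>
        intro hl
        obtain ⟨c, hc, hnc⟩ := ih fun q hq => hl q (List.mem_cons_of_mem _ hq)
        set F := (l.map fun p => p.1 ^ p.2).prod with hF
        set Gd := (l.map fun p => s₀ p.1 ^ p.2).prod with hGd
        rcases hl p List.mem_cons_self with he | he
        · refine ⟨s₀ p.1 * c, ?_, ?_⟩
          · simp only [List.map_cons, List.prod_cons, he, zpow_one]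
            exact h3 p.1 (s₀ p.1) F c (hs₀ p.1) hc
          · simp only [List.map_cons, List.prod_cons, he, zpow_one]
            have heq : s₀ p.1 * Gd * (s₀ p.1 * c)⁻¹ = s₀ p.1 * (Gd * c⁻¹) * (s₀ p.1)⁻¹ := by group
            rw [heq]
            exact hnorm (s₀ p.1) ⟨p.1, hs₀ p.1⟩ _ hnc
        · obtain ⟨d, hd⟩ := h2 p.1⁻¹
          refine ⟨d * c, ?_, ?_⟩
          · simp only [List.map_cons, List.prod_cons, he, zpow_neg, zpow_one]
            exact h3 p.1⁻¹ d F c hd hc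
          · simp only [List.map_cons, List.prod_cons, he, zpow_neg, zpow_one]
            have hds : (1, d * s₀ p.1) ∈ s := by
              have := h3 p.1⁻¹ d p.1 (s₀ p.1) hd (hs₀ p.1)
              simpa using this
            have heq : (s₀ p.1)⁻¹ * Gd * (d * c)⁻¹ =
                (d * s₀ p.1)⁻¹ * (d * (Gd * c⁻¹) * d⁻¹) := by group
            rw [heq]
            exact mul_mem (inv_mem (Subgroup.subset_closure hds))
              (hnorm d ⟨p.1⁻¹, hd⟩ _ hnc)
    intro l hl hprod
    obtain ⟨c, hc, hnc⟩ := main l hl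
    rw [hprod] at hc
    have hcN : c ∈ N := Subgroup.subset_closure hc
    have : (l.map fun p => s₀ p.1 ^ p.2).prod = ((l.map fun p => s₀ p.1 ^ p.2).prod * c⁻¹) * c := by
      group
    rw [this]
    exact mul_mem hnc hcN

  have hsurj : Function.Surjective ν := fun h => (h2 h).elim fun g hg => ⟨g, h1 h g hg⟩
  choose s₁ hs₁ using h2
  exact ⟨hsurj, hcomm, ⟨s₁, (part4 s₁ hs₁).1, N, hcomm, (part4 s₁ hs₁).2⟩, part4⟩
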